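/- Fix r₀ > 0, γ > 1, A > 0 and a real number k. Let J_z : [0,r₀] → ℝ be continuous, define B_θ(r) = (1/r) ∫₀^r s J_z(s) ds for r ∈ (0,r₀] (B_θ(0)=0) and p'(r) = −B_θ(r) J_z(r), assume p is admissible (p ∈ C¹([0,r₀]), p > 0 on [0,r₀), p(r₀) = 0, p' < 0 on some interval [r₀−ε, r₀), lim_{r→r₀⁻} p(r)/p'(r) = 0), and set ρ = (p/A)^{1/γ}. Then there exists a constant C > 0 such that for all C¹ functions ξ, η on [0,r₀] with ξ(0) = 0 and J(ξ,η) = 2π² ∫₀^{r₀} ρ(r)(ξ(r)² + η(r)²) r dr = 1, one has E_{0,k}(ξ,η) ≥ −C, where E_{0,k}(ξ,η) = 2π² ∫₀^{r₀} { 2p'(r)ξ(r)²/r + B_θ(r)² [ kη(r) − (1/r)((rξ)'(r) − 2ξ(r)) ]² + γ p(r) [ (1/r)(rξ)'(r) − kη(r) ]² } r dr. -/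

import Mathlib

open Set MeasureTheory

set_option maxHeartbeats 1600000

/-- Lemma 3.9, lower bound for the sausage-mode energy. For an admissible
z-pinch equilibrium there is `C > 0` such that `E_{0,k}(ξ,η) ≥ -C` for every `C¹` pair
`(ξ,η)` with `ξ(0) = 0` and `J(ξ,η) = 1`. -/
theorem zpinch_sausage_energy_lower_bound
    (r₀ γ A k : ℝ) (hr₀ : 0 < r₀) (hγ : 1 < γ) (hA : 0 < A)
    (Jz Bθ p p' ρ : ℝ → ℝ)
    (hJc : ContinuousOn Jz (Icc (0:ℝ) r₀))
    (hBθ0 : Bθ 0 = 0)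
    (hBθ : ∀ r ∈ Ioc (0:ℝ) r₀, Bθ r = (1 / r) * ∫ s in (0:ℝ)..r, s * Jz s)
    (hp'def : ∀ r ∈ Icc (0:ℝ) r₀, p' r = -(Bθ r * Jz r))
    (hp : ∀ r ∈ Icc (0:ℝ) r₀, HasDerivWithinAt p (p' r) (Icc (0:ℝ) r₀) r)
    -- admissibility of `p`
    (hppos : ∀ r ∈ Ico (0:ℝ) r₀, 0 < p r)
    (hpr₀ : p r₀ = 0)
    (ε : ℝ) (hε : 0 < ε)
    (hp'neg : ∀ r ∈ Ico (r₀ - ε) r₀, p' r < 0)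
    (hlim : Filter.Tendsto (fun r => p r / p' r) (nhdsWithin r₀ (Iio r₀)) (nhds 0))
    (hρ : ∀ r ∈ Icc (0:ℝ) r₀, ρ r = (p r / A) ^ (1 / γ)) :
    ∃ C > 0, ∀ ξ η ξ' η' : ℝ → ℝ,
      (∀ r ∈ Icc (0:ℝ) r₀, HasDerivWithinAt ξ (ξ' r) (Icc (0:ℝ) r₀) r) →
      ContinuousOn ξ' (Icc (0:ℝ) r₀) →
      (∀ r ∈ Icc (0:ℝ) r₀, HasDerivWithinAt η (η' r) (Icc (0:ℝ) r₀) r) →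
      ContinuousOn η' (Icc (0:ℝ) r₀) →
      ξ 0 = 0 →
      2 * Real.pi ^ 2 * (∫ r in (0:ℝ)..r₀, ρ r * ((ξ r) ^ 2 + (η r) ^ 2) * r) = 1 →
      -C ≤ 2 * Real.pi ^ 2 * ∫ r in (0:ℝ)..r₀,
        (2 * p' r * (ξ r) ^ 2 / r
          + (Bθ r) ^ 2 * (k * η r - (r * ξ' r - ξ r) / r) ^ 2
          + γ * p r * ((ξ r + r * ξ' r) / r - k * η r) ^ 2) * r := by
  have hr₀' : (0:ℝ) ≤ r₀ := hr₀.le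
  have hγ0 : (0:ℝ) < γ := by linarith
  have hγne : γ ≠ 0 := ne_of_gt hγ0
  have hIcc : Set.Nonempty (Icc (0:ℝ) r₀) := ⟨0, by simp [hr₀']⟩
  have huIcc : uIcc (0:ℝ) r₀ = Icc 0 r₀ := uIcc_of_le hr₀'
  -- continuity of p
  have hpc : ContinuousOn p (Icc (0:ℝ) r₀) := fun r hr => (hp r hr).continuousWithinAt
  -- nonnegativity of p
  have hpnn : ∀ r ∈ Icc (0:ℝ) r₀, 0 ≤ p r := by
    intro r hr
    rcases eq_or_lt_of_le hr.2 with h | h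
    · simp [h, hpr₀]
    · exact (hppos r ⟨hr.1, h⟩).le
  -- nonnegativity of ρ
  have hρnn : ∀ r ∈ Icc (0:ℝ) r₀, 0 ≤ ρ r := by
    intro r hr
    rw [hρ r hr]
    exact Real.rpow_nonneg (div_nonneg (hpnn r hr) hA.le) _
  -- a uniform bound for p
  obtain ⟨r₁, hr₁, hPm⟩ := isCompact_Icc.exists_isMaxOn hIcc hpc
  set Pm := p r₁ with hPmdef
  have hPm0 : 0 ≤ Pm := hpnn r₁ hr₁
  -- the comparison constant M with p ≤ M ρ
  set M : ℝ := A * (Pm / A) ^ ((1/γ) * (γ - 1)) with hMdef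
  have hM0 : 0 ≤ M := mul_nonneg hA.le (Real.rpow_nonneg (div_nonneg hPm0 hA.le) _)
  have hpM : ∀ r ∈ Icc (0:ℝ) r₀, p r ≤ M * ρ r := by
    intro r hr
    have hpr : 0 ≤ p r / A := div_nonneg (hpnn r hr) hA.le
    have hrew : p r = A * (ρ r) ^ (γ:ℝ) := by
      rw [hρ r hr, ← Real.rpow_mul hpr, one_div, inv_mul_cancel₀ hγne, Real.rpow_one]
      field_simp
    rcases eq_or_lt_of_le (hρnn r hr) with h0 | h0
    · rw [hrew, ← h0, Real.zero_rpow hγne]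
      simp
    · have hsplit : (ρ r) ^ (γ:ℝ) = (ρ r) ^ (γ - 1) * ρ r := by
        have h2 := Real.rpow_add h0 (γ-1) 1
        rw [Real.rpow_one] at h2
        rw [← h2]
        norm_num
      have h1 : ρ r ≤ (Pm / A) ^ (1/γ) := by
        rw [hρ r hr]
        exact Real.rpow_le_rpow hpr (by gcongr; exact hPm hr) (by positivity)
      have h3 : (ρ r) ^ (γ - 1) ≤ ((Pm / A) ^ (1/γ)) ^ (γ - 1) :=
        Real.rpow_le_rpow (hρnn r hr) h1 (by linarith)
      have hM' : M = A * ((Pm / A) ^ (1/γ)) ^ (γ - 1) := by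
        rw [hMdef, Real.rpow_mul (div_nonneg hPm0 hA.le)]
      rw [hrew, hsplit, hM', mul_assoc]
      have := mul_le_mul_of_nonneg_right h3 (hρnn r hr)
      nlinarith [hA.le]
  -- bound for Jz
  obtain ⟨rJ, hrJ, hKmax⟩ := isCompact_Icc.exists_isMaxOn hIcc hJc.abs
  set K : ℝ := |Jz rJ| with hKdef
  have hK0 : 0 ≤ K := abs_nonneg _
  have hJzb : ∀ s ∈ Icc (0:ℝ) r₀, |Jz s| ≤ K := fun s hs => hKmax hs
  -- bound for Bθ
  have hBθb : ∀ r ∈ Ioc (0:ℝ) r₀, |Bθ r| ≤ K * r := by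
    intro r hr
    rw [hBθ r hr]
    have hint : ‖∫ s in (0:ℝ)..r, s * Jz s‖ ≤ (r * K) * |r - 0| := by
      apply intervalIntegral.norm_integral_le_of_norm_le_const
      intro x hx
      rw [uIoc_of_le hr.1.le] at hx
      have hx1 : 0 < x := hx.1
      have hx2 : x ≤ r := hx.2
      have hxI : x ∈ Icc (0:ℝ) r₀ := ⟨hx1.le, hx2.trans hr.2⟩
      rw [Real.norm_eq_abs, abs_mul, abs_of_pos hx1]
      exact mul_le_mul hx2 (hJzb x hxI) (abs_nonneg _) (le_of_lt (lt_of_lt_of_le hx1 hx2))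
    have hrne : r ≠ 0 := ne_of_gt hr.1
    rw [abs_mul, abs_div, abs_one, abs_of_pos hr.1]
    rw [sub_zero, abs_of_pos hr.1] at hint
    calc 1 / r * |∫ s in (0:ℝ)..r, s * Jz s| ≤ 1 / r * (r * K * r) := by
          apply mul_le_mul_of_nonneg_left _ (div_nonneg zero_le_one hr.1.le)
          exact hint
      _ = K * r := by field_simp
  -- continuity of Bθ on [0, r₀]
  have hIcont : ContinuousOn (fun x => ∫ s in (0:ℝ)..x, s * Jz s) (Icc (0:ℝ) r₀) := by
    have : IntegrableOn (fun s => s * Jz s) (uIcc (0:ℝ) r₀) volume := by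
      rw [huIcc]
      exact (continuousOn_id.mul hJc).integrableOn_compact isCompact_Icc
    simpa [huIcc] using intervalIntegral.continuousOn_primitive_interval this
  have hBθc : ContinuousOn Bθ (Icc (0:ℝ) r₀) := by
    intro x hx
    rcases eq_or_lt_of_le hx.1 with h0 | h0
    · -- continuity at 0 by squeezing
      subst h0
      unfold ContinuousWithinAt
      rw [hBθ0]
      apply squeeze_zero_norm' (a := fun r => K * r)
      · apply eventually_nhdsWithin_of_forall
        intro r hr
        rcases eq_or_lt_of_le hr.1 with h0' | h0'
        · rw [← h0', hBθ0]
          simp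
        · exact hBθb r ⟨h0', hr.2⟩
      · have hT : Filter.Tendsto (fun r : ℝ => K * r) (nhds 0) (nhds 0) := by
          have h := (continuous_const.mul continuous_id : Continuous (fun r : ℝ => K * r)).tendsto (0:ℝ)
          simpa only [mul_zero] using (continuous_mul_left K).tendsto 0
        exact hT.mono_left nhdsWithin_le_nhds
    · -- continuity at interior/right points
      have hBt : ContinuousWithinAt (fun x => (1/x) * ∫ s in (0:ℝ)..x, s * Jz s)
          (Icc (0:ℝ) r₀) x := by
        apply ContinuousWithinAt.mul
        · exact (continuousWithinAt_const.div continuousWithinAt_id (ne_of_gt h0))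
        · exact hIcont x hx
      apply hBt.congr_of_eventuallyEq
      · have hne : ∀ᶠ r in nhdsWithin x (Icc (0:ℝ) r₀), 0 < r := by
          apply Filter.eventually_iff_exists_mem.2
          refine ⟨Ioi 0 ∩ Icc 0 r₀, ?_, fun y hy => hy.1⟩
          exact Filter.inter_mem (nhdsWithin_le_nhds (Ioi_mem_nhds h0)) self_mem_nhdsWithin
        filter_upwards [hne, self_mem_nhdsWithin] with r hr1 hr2
        exact hBθ r ⟨hr1, hr2.2⟩
      · exact hBθ x ⟨h0, hx.2⟩
  -- continuity of p'
  have hp'c : ContinuousOn p' (Icc (0:ℝ) r₀) := by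
    exact ContinuousOn.congr ((hBθc.mul hJc).neg) hp'def
  -- constants
  set β : ℝ := 2 - 2/γ with hβdef
  have hβpos : 0 < β := by
    have h2 : 2/γ < 2 := by rw [div_lt_iff₀ hγ0]; nlinarith
    rw [hβdef]; linarith
  set c : ℝ := 4 * k^2 * M / β with hcdef
  have hc0 : 0 ≤ c := by
    apply div_nonneg _ hβpos.le
    positivity
  have hcβ : c * β = 4 * k^2 * M := by
    rw [hcdef]; field_simp
  refine ⟨c + 1, by positivity, ?_⟩
  intro ξ η ξ' η' hξ hξ'c hη hη'c hξ0 hJ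
  have hξc : ContinuousOn ξ (Icc (0:ℝ) r₀) := fun r hr => (hξ r hr).continuousWithinAt
  have hηc : ContinuousOn η (Icc (0:ℝ) r₀) := fun r hr => (hη r hr).continuousWithinAt
  -- the function ξ r / r, extended continuously at 0
  set φ : ℝ → ℝ := fun r => if r = 0 then ξ' 0 else ξ r / r with hφdef
  have hφ0 : φ 0 = ξ' 0 := if_pos rfl
  have hφr : ∀ r : ℝ, r ≠ 0 → φ r = ξ r / r := fun r hr => if_neg hr
  have hne0 : ∀ x : ℝ, 0 < x → ∀ᶠ r in nhdsWithin x (Icc (0:ℝ) r₀), r ≠ 0 := by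
    intro x hx0
    have : ∀ᶠ r in nhdsWithin x (Icc (0:ℝ) r₀), 0 < r := by
      apply Filter.eventually_iff_exists_mem.2
      exact ⟨Ioi 0 ∩ Icc 0 r₀,
        Filter.inter_mem (nhdsWithin_le_nhds (Ioi_mem_nhds hx0)) self_mem_nhdsWithin,
        fun y hy => hy.1⟩
    filter_upwards [this] with r hr using ne_of_gt hr
  have hφc : ContinuousOn φ (Icc (0:ℝ) r₀) := by
    intro x hx
    rcases eq_or_lt_of_le hx.1 with h0 | h0
    · subst h0
      have hs := hξ 0 hx
      rw [hasDerivWithinAt_iff_tendsto_slope] at hs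
      unfold ContinuousWithinAt
      rw [hφ0]
      have hsub : Icc (0:ℝ) r₀ ⊆ (Icc 0 r₀ \ {0}) ∪ {0} := by
        intro y hy
        by_cases hy0 : y = 0
        · exact Or.inr (by simp [hy0])
        · exact Or.inl ⟨hy, hy0⟩
      have hsplit : nhdsWithin (0:ℝ) (Icc 0 r₀)
          ≤ nhdsWithin 0 (Icc 0 r₀ \ {0}) ⊔ pure 0 := by
        calc nhdsWithin (0:ℝ) (Icc 0 r₀)
            ≤ nhdsWithin 0 ((Icc 0 r₀ \ {0}) ∪ {0}) := nhdsWithin_mono _ hsub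
          _ = _ := by rw [nhdsWithin_union, nhdsWithin_singleton]
      apply Filter.Tendsto.mono_left _ hsplit
      rw [Filter.tendsto_sup]
      constructor
      · apply Filter.Tendsto.congr' _ hs
        filter_upwards [self_mem_nhdsWithin] with r hr
        have hrne : r ≠ 0 := hr.2
        rw [slope_def_field, hφr r hrne, hξ0]
        field_simp
        ring
      · have := tendsto_pure_nhds φ 0
        rwa [hφ0] at this
    · have hg : ContinuousWithinAt (fun r => ξ r / r) (Icc (0:ℝ) r₀) x :=
        (hξc x hx).div continuousWithinAt_id (ne_of_gt h0)
      apply hg.congr_of_eventuallyEq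
      · filter_upwards [hne0 x h0] with r hr using hφr r hr
      · exact hφr x (ne_of_gt h0)
  -- named integrands
  set u : ℝ → ℝ := fun r => p' r * ξ r ^ 2 with hudef
  set v : ℝ → ℝ := fun r => p r * (2 * ξ r * ξ' r) with hvdef
  set Yf : ℝ → ℝ := fun r => φ r + ξ' r - k * η r with hYdef
  set hF : ℝ → ℝ := fun r => γ * p r * (Yf r) ^ 2 * r with hhdef
  set wF : ℝ → ℝ := fun r => Bθ r ^ 2 * (k * η r - (ξ' r - φ r)) ^ 2 * r with hwdef
  set q : ℝ → ℝ := fun r => (p r / A) ^ (1/γ) * (ξ r ^ 2 + η r ^ 2) * r with hqdef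
  -- continuity of all integrands
  have hYc : ContinuousOn Yf (Icc (0:ℝ) r₀) := (hφc.add hξ'c).sub (continuousOn_const.mul hηc)
  have huc : ContinuousOn u (Icc (0:ℝ) r₀) := hp'c.mul (hξc.pow 2)
  have hvc : ContinuousOn v (Icc (0:ℝ) r₀) :=
    hpc.mul ((continuousOn_const.mul hξc).mul hξ'c)
  have hhc : ContinuousOn hF (Icc (0:ℝ) r₀) :=
    ((continuousOn_const.mul hpc).mul (hYc.pow 2)).mul continuousOn_id
  have hwc : ContinuousOn wF (Icc (0:ℝ) r₀) :=
    ((hBθc.pow 2).mul (((continuousOn_const.mul hηc).sub (hξ'c.sub hφc)).pow 2)).mul continuousOn_id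
  have hqc : ContinuousOn q (Icc (0:ℝ) r₀) := by
    apply ContinuousOn.mul _ continuousOn_id
    apply ContinuousOn.mul _ ((hξc.pow 2).add (hηc.pow 2))
    apply ContinuousOn.rpow_const (hpc.div_const A)
    intro x hx
    right
    positivity
  -- interval integrability
  have hInt : ∀ F : ℝ → ℝ, ContinuousOn F (Icc (0:ℝ) r₀) →
      IntervalIntegrable F volume 0 r₀ := by
    intro F hF
    exact (huIcc ▸ hF : ContinuousOn F (uIcc (0:ℝ) r₀)).intervalIntegrable
  have hIu := hInt u huc
  have hIv := hInt v hvc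
  have hIh := hInt hF hhc
  have hIw := hInt wF hwc
  have hIq := hInt q hqc
  -- integration by parts: ∫ (u + v) = 0
  have hIBP : (∫ r in (0:ℝ)..r₀, (u r + v r)) = 0 := by
    have hFc : ContinuousOn (fun r => p r * ξ r ^ 2) (Icc (0:ℝ) r₀) := hpc.mul (hξc.pow 2)
    have hder : ∀ x ∈ Ioo (0:ℝ) r₀,
        HasDerivWithinAt (fun r => p r * ξ r ^ 2) (u x + v x) (Ioi x) x := by
      intro x hx
      have hxI : x ∈ Icc (0:ℝ) r₀ := ⟨hx.1.le, hx.2.le⟩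
      have hmem : Icc (0:ℝ) r₀ ∈ nhds x := Icc_mem_nhds hx.1 hx.2
      have hpx : HasDerivAt p (p' x) x := (hp x hxI).hasDerivAt hmem
      have hξx : HasDerivAt ξ (ξ' x) x := (hξ x hxI).hasDerivAt hmem
      have := hpx.mul (hξx.pow 2)
      have h2 : p' x * ξ x ^ 2 + p x * ((2:ℕ) * ξ x ^ (2-1) * ξ' x) = u x + v x := by
        simp [hudef, hvdef]
      rw [Pi.pow_apply, h2] at this
      exact this.hasDerivWithinAt
    have := intervalIntegral.integral_eq_sub_of_hasDeriv_right_of_le hr₀' hFc hder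
      (hIu.add hIv)
    rw [this, hpr₀, hξ0]
    ring
  have huv : (∫ r in (0:ℝ)..r₀, u r) = -(∫ r in (0:ℝ)..r₀, v r) := by
    rw [intervalIntegral.integral_add hIu hIv] at hIBP
    linarith
  -- value of the constraint integral
  have hπ : (0:ℝ) < 2 * Real.pi ^ 2 := by positivity
  have hJq : (∫ r in (0:ℝ)..r₀, q r) = 1 / (2 * Real.pi ^ 2) := by
    have hcongr : (∫ r in (0:ℝ)..r₀, ρ r * ((ξ r) ^ 2 + (η r) ^ 2) * r)
        = ∫ r in (0:ℝ)..r₀, q r := by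
      apply intervalIntegral.integral_congr
      intro x hx
      rw [huIcc] at hx
      simp only [hqdef]
      rw [hρ x hx]
    rw [hcongr] at hJ
    field_simp at hJ ⊢
    linarith
  -- the pointwise inequality
  have hkey : ∀ r ∈ Icc (0:ℝ) r₀, -c * q r ≤ (-2) * v r + hF r := by
    intro r hr
    rcases eq_or_lt_of_le hr.1 with h0 | h0
    · simp only [hqdef, hvdef, hhdef, ← h0, hξ0]
      simp
    · have hrne : r ≠ 0 := ne_of_gt h0
      simp only [hqdef, hvdef, hhdef, hYdef]
      rw [hφr r hrne]
      set P := p r with hPdef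
      set X := ξ r with hXdef
      set N := η r with hNdef
      set Ξ := ξ' r with hΞdef
      set ρr : ℝ := (p r / A) ^ (1/γ) with hρrdef
      have hP : 0 ≤ P := hpnn r hr
      have hρr0 : 0 ≤ ρr := Real.rpow_nonneg (div_nonneg (hpnn r hr) hA.le) _
      have hPM : P ≤ M * ρr := by
        have := hpM r hr
        rwa [hρ r hr] at this
      have hcρ : 4 * k^2 * P ≤ c * β * ρr := by
        rw [hcβ]
        calc 4 * k^2 * P ≤ 4 * k^2 * (M * ρr) := by
              apply mul_le_mul_of_nonneg_left hPM (by positivity)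
          _ = 4 * k^2 * M * ρr := by ring
      set G : ℝ := r * (X / r + Ξ - k * N) with hGdef
      have hG : G = X + r * Ξ - k * (r * N) := by
        rw [hGdef]; field_simp
      have hID : ((-2) * (P * (2 * X * Ξ)) + γ * P * (X / r + Ξ - k * N)^2 * r
            + c * (ρr * (X^2 + N^2) * r)) * (r * γ * β)
          = P * (β * (γ * G - 2*X)^2 + γ * (β * X - 2*k*(r*N))^2 + (γ * β^2) * X^2)
            + (γ * β * c * ρr) * (r^2 * X^2)
            + (γ * (r*N)^2) * (c * β * ρr - 4 * k^2 * P) := by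
        rw [hGdef, hβdef]
        field_simp
        ring
      have hSOS : 0 ≤ P * (β * (γ * G - 2*X)^2 + γ * (β * X - 2*k*(r*N))^2
          + (γ * β^2) * X^2) := by
        apply mul_nonneg hP
        have t1 : 0 ≤ β * (γ * G - 2*X)^2 := mul_nonneg hβpos.le (sq_nonneg _)
        have t2 : 0 ≤ γ * (β * X - 2*k*(r*N))^2 := mul_nonneg hγ0.le (sq_nonneg _)
        have t3 : 0 ≤ (γ * β^2) * X^2 := mul_nonneg (by positivity) (sq_nonneg _)
        linarith
      have ht2 : 0 ≤ (γ * β * c * ρr) * (r^2 * X^2) := by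
        apply mul_nonneg
        · exact mul_nonneg (mul_nonneg (mul_nonneg hγ0.le hβpos.le) hc0) hρr0
        · positivity
      have ht3 : 0 ≤ (γ * (r*N)^2) * (c * β * ρr - 4 * k^2 * P) := by
        apply mul_nonneg (mul_nonneg hγ0.le (sq_nonneg _))
        linarith
      have hpos : (0:ℝ) < r * γ * β := by positivity
      have hfin : 0 ≤ ((-2) * (P * (2 * X * Ξ)) + γ * P * (X / r + Ξ - k * N)^2 * r
            + c * (ρr * (X^2 + N^2) * r)) := by
        have h1 : 0 ≤ ((-2) * (P * (2 * X * Ξ)) + γ * P * (X / r + Ξ - k * N)^2 * r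
            + c * (ρr * (X^2 + N^2) * r)) * (r * γ * β) := by
          rw [hID]; linarith
        exact (mul_nonneg_iff_of_pos_right hpos).mp h1
      linarith
  -- comparison of the two integrals
  have hIlhs : IntervalIntegrable (fun r => -c * q r) volume 0 r₀ :=
    hInt _ (continuousOn_const.mul hqc)
  have hIrhs : IntervalIntegrable (fun r => (-2) * v r + hF r) volume 0 r₀ :=
    hInt _ ((continuousOn_const.mul hvc).add hhc)
  have hmono : (∫ r in (0:ℝ)..r₀, -c * q r)
      ≤ ∫ r in (0:ℝ)..r₀, ((-2) * v r + hF r) :=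
    intervalIntegral.integral_mono_on hr₀' hIlhs hIrhs hkey
  have hlhs : (∫ r in (0:ℝ)..r₀, -c * q r) = -c * (1 / (2 * Real.pi ^ 2)) := by
    rw [intervalIntegral.integral_const_mul, hJq]
  have hrhs : (∫ r in (0:ℝ)..r₀, ((-2) * v r + hF r))
      = (-2) * (∫ r in (0:ℝ)..r₀, v r) + (∫ r in (0:ℝ)..r₀, hF r) := by
    rw [intervalIntegral.integral_add (hIv.const_mul _) hIh,
      intervalIntegral.integral_const_mul]
  -- identification of the energy integrand
  have hEq : EqOn
      (fun r => (2 * p' r * (ξ r) ^ 2 / r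
          + (Bθ r) ^ 2 * (k * η r - (r * ξ' r - ξ r) / r) ^ 2
          + γ * p r * ((ξ r + r * ξ' r) / r - k * η r) ^ 2) * r)
      (fun r => 2 * u r + hF r + wF r) (uIcc (0:ℝ) r₀) := by
    intro x hx
    rw [huIcc] at hx
    by_cases hx0 : x = 0
    · subst hx0
      simp [hudef, hhdef, hwdef, hξ0]
    · simp only [hudef, hhdef, hwdef, hYdef]
      rw [hφr x hx0]
      generalize p' x = d
      generalize p x = P
      generalize Bθ x = B
      generalize ξ x = X
      generalize η x = N
      generalize ξ' x = Ξ
      field_simp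
      ring
  have hEint : (∫ r in (0:ℝ)..r₀,
        (2 * p' r * (ξ r) ^ 2 / r
          + (Bθ r) ^ 2 * (k * η r - (r * ξ' r - ξ r) / r) ^ 2
          + γ * p r * ((ξ r + r * ξ' r) / r - k * η r) ^ 2) * r)
      = 2 * (∫ r in (0:ℝ)..r₀, u r) + (∫ r in (0:ℝ)..r₀, hF r)
        + (∫ r in (0:ℝ)..r₀, wF r) := by
    rw [intervalIntegral.integral_congr hEq,
      intervalIntegral.integral_add ((hIu.const_mul _).add hIh) hIw,
      intervalIntegral.integral_add (hIu.const_mul _) hIh,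
      intervalIntegral.integral_const_mul]
  have hw0 : 0 ≤ ∫ r in (0:ℝ)..r₀, wF r := by
    apply intervalIntegral.integral_nonneg hr₀'
    intro x hx
    simp only [hwdef]
    apply mul_nonneg (mul_nonneg (sq_nonneg _) (sq_nonneg _)) hx.1
  -- conclusion
  have hbound : -c * (1 / (2 * Real.pi ^ 2)) ≤ ∫ r in (0:ℝ)..r₀,
        (2 * p' r * (ξ r) ^ 2 / r
          + (Bθ r) ^ 2 * (k * η r - (r * ξ' r - ξ r) / r) ^ 2
          + γ * p r * ((ξ r + r * ξ' r) / r - k * η r) ^ 2) * r := by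
    rw [hEint, huv]
    rw [hlhs, hrhs] at hmono
    linarith [hmono, hw0]
  have hfinal := mul_le_mul_of_nonneg_left hbound hπ.le
  have hval : 2 * Real.pi ^ 2 * (-c * (1 / (2 * Real.pi ^ 2))) = -c := by
    field_simp
  rw [hval] at hfinal
  linarith
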